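/- Let g ∈ ℝ^d with ‖g‖ ≥ L²/M and H symmetric with gᵀHg ≤ (1 + C_H)L‖g‖² for some C_H ≤ 1/40, where L, M > 0. Then the Cauchy radius R_C = −gᵀHg/(M‖g‖²) + sqrt((gᵀHg/(M‖g‖²))² + 2‖g‖/M) satisfies R_C ≥ 7L/(10M). -/

import Mathlib

open RealInnerProductSpace

theorem cauchy_radius_lower_bound (d : ℕ) (L M C_H : ℝ) (hL : 0 < L) (hM : 0 < M)
    (hCH : C_H ≤ 1 / 40)
    (g : EuclideanSpace ℝ (Fin d))
    (H : EuclideanSpace ℝ (Fin d) →L[ℝ] EuclideanSpace ℝ (Fin d))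
    (hHsymm : ∀ u v, ⟪H u, v⟫ = ⟪u, H v⟫)
    (hg : L ^ 2 / M ≤ ‖g‖)
    (hcurv : ⟪g, H g⟫ ≤ (1 + C_H) * L * ‖g‖ ^ 2) :
    7 * L / (10 * M) ≤
      -(⟪g, H g⟫ / (M * ‖g‖ ^ 2)) +
        Real.sqrt ((⟪g, H g⟫ / (M * ‖g‖ ^ 2)) ^ 2 + 2 * ‖g‖ / M) := by
  have hn : 0 < ‖g‖ := lt_of_lt_of_le (by positivity) hg
  set t := ⟪g, H g⟫ with ht
  set x := t / (M * ‖g‖ ^ 2) with hx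
  have hx_le : x ≤ 41 * L / (40 * M) := by
    rw [hx, div_le_div_iff₀ (by positivity) (by positivity)]
    nlinarith [mul_le_mul_of_nonneg_right hcurv (by positivity : (0:ℝ) ≤ 40 * M),
      mul_nonneg (mul_nonneg (mul_nonneg (sub_nonneg.2 hCH) hL.le) (sq_nonneg ‖g‖)) hM.le]
  have key : (x + 7 * L / (10 * M)) ^ 2 ≤ x ^ 2 + 2 * ‖g‖ / M := by
    have h1 : 2 * (L ^ 2 / M) / M ≤ 2 * ‖g‖ / M := by
      gcongr
    have h2 : x * (7 * L / (10 * M)) ≤ (41 * L / (40 * M)) * (7 * L / (10 * M)) :=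
      mul_le_mul_of_nonneg_right hx_le (by positivity)
    have h3 : 2 * ((41 * L / (40 * M)) * (7 * L / (10 * M))) + (7 * L / (10 * M)) * (7 * L / (10 * M))
        ≤ 2 * (L ^ 2 / M) / M := by
      have hM' := hM.ne'
      field_simp
      nlinarith [sq_nonneg L, mul_pos hM hM, sq_nonneg (L*M)]
    nlinarith [h1, h2, h3]
  rcases le_or_gt (x + 7 * L / (10 * M)) 0 with h | h
  · have hs := Real.sqrt_nonneg (x ^ 2 + 2 * ‖g‖ / M)
    linarith
  · have hs : x + 7 * L / (10 * M) ≤ Real.sqrt (x ^ 2 + 2 * ‖g‖ / M) := by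
      rw [show x + 7 * L / (10 * M) = Real.sqrt ((x + 7 * L / (10 * M)) ^ 2) from
        (Real.sqrt_sq h.le).symm]
      exact Real.sqrt_le_sqrt key
    linarith
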